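/- arXiv:quant-ph/0504203 — 2 statements merged into one kernel-verified Lean document; each statement's English description precedes it below -/
import Mathlib

section
/- For every density matrix σ on ℂ² ⊗ ℂ², with x_{jk} = ⟨φʲ, σ φᵏ⟩, one has Tr((σ ⊗ σ)·L₃⁺) = Σ_{j=1}^{3} (x₀₀·x_{jj} + |x₀ⱼ|²). -/
open Matrix
open scoped Matrix Kronecker ComplexOrder

noncomputable section

/-- Index type of `ℂ² ⊗ ℂ²`. -/
abbrev Q : Type := Fin 2 × Fin 2

/-- The standard basis vector `|ab⟩` of `ℂ² ⊗ ℂ²`. -/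
def ket (a b : Fin 2) : Q → ℂ := fun p => if p = (a, b) then 1 else 0

/-- The Bell basis `φ⁰, φ¹, φ², φ³` of `ℂ² ⊗ ℂ²`. -/
def bell : Fin 4 → Q → ℂ
  | 0 => fun p => (ket 0 0 p + ket 1 1 p) / (Real.sqrt 2 : ℂ)
  | 1 => fun p => Complex.I * (ket 0 1 p + ket 1 0 p) / (Real.sqrt 2 : ℂ)
  | 2 => fun p => (-ket 0 1 p + ket 1 0 p) / (Real.sqrt 2 : ℂ)
  | 3 => fun p => Complex.I * (ket 0 0 p - ket 1 1 p) / (Real.sqrt 2 : ℂ)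

/-- The product basis `e^{jk} = φʲ ⊗ φᵏ` of `(ℂ²⊗ℂ²)⊗(ℂ²⊗ℂ²)`. -/
def e (j k : Fin 4) : Q × Q → ℂ := fun pq => bell j pq.1 * bell k pq.2

/-- Rank-one operator `|v⟩⟨v|`. -/
def outer {m : Type*} (v : m → ℂ) : Matrix m m ℂ := vecMulVec v (star v)

/-- Orthogonal projection onto
`span{e^{jk}+e^{kj} : 1≤j<k≤3} ∪ {e^{11}−e^{22}, e^{22}−e^{33}}`. -/
def K5 : Matrix (Q × Q) (Q × Q) ℂ :=
  (1 / 2 : ℂ) • (outer (e 1 2 + e 2 1) + outer (e 2 3 + e 3 2) + outer (e 3 1 + e 1 3)) +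
    (1 / 2 : ℂ) • outer (e 1 1 - e 2 2) +
    (1 / 6 : ℂ) • outer (e 1 1 + e 2 2 - (2 : ℂ) • e 3 3)

/-- Orthogonal projection onto `span{e^{11}+e^{22}+e^{33}}`. -/
def K1 : Matrix (Q × Q) (Q × Q) ℂ :=
  (1 / 3 : ℂ) • outer (e 1 1 + e 2 2 + e 3 3)

/-- Orthogonal projection onto `span{e^{jk}−e^{kj} : 1≤j<k≤3}`. -/
def K3m : Matrix (Q × Q) (Q × Q) ℂ :=
  (1 / 2 : ℂ) • (outer (e 1 2 - e 2 1) + outer (e 2 3 - e 3 2) + outer (e 3 1 - e 1 3))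

/-- Orthogonal projection onto `span{e^{00}}`. -/
def L1 : Matrix (Q × Q) (Q × Q) ℂ := outer (e 0 0)

/-- Orthogonal projection onto `span{e^{0j}+e^{j0} : j=1,2,3}`. -/
def L3p : Matrix (Q × Q) (Q × Q) ℂ :=
  (1 / 2 : ℂ) • (outer (e 0 1 + e 1 0) + outer (e 0 2 + e 2 0) + outer (e 0 3 + e 3 0))

/-- Orthogonal projection onto `span{e^{0j}−e^{j0} : j=1,2,3}`. -/
def L3m : Matrix (Q × Q) (Q × Q) ℂ :=
  (1 / 2 : ℂ) • (outer (e 0 1 - e 1 0) + outer (e 0 2 - e 2 0) + outer (e 0 3 - e 3 0))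

/-- The matrix elements `x_{jk} = ⟨φʲ, σ φᵏ⟩` of a state `σ` in the Bell basis. -/
def x (σ : Matrix Q Q ℂ) (j k : Fin 4) : ℂ := star (bell j) ⬝ᵥ σ.mulVec (bell k)

lemma trace_mul_outer (A : Matrix (Q × Q) (Q × Q) ℂ) (v : Q × Q → ℂ) :
    (A * outer v).trace = star v ⬝ᵥ A.mulVec v := by
  simp only [Matrix.trace, Matrix.diag, Matrix.mul_apply, outer, vecMulVec_apply,
    dotProduct, mulVec, Pi.star_apply, Finset.mul_sum]
  exact Finset.sum_congr rfl fun i _ => Finset.sum_congr rfl fun j _ => by ring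

lemma kron_dot (σ : Matrix Q Q ℂ) (j k l m : Fin 4) :
    star (e j k) ⬝ᵥ (σ ⊗ₖ σ).mulVec (e l m) = x σ j l * x σ k m := by
  simp only [x, e, dotProduct, mulVec, Matrix.kroneckerMap_apply, Pi.star_apply, star_mul',
    Fintype.sum_prod_type, Fin.sum_univ_succ, Fin.sum_univ_zero, add_zero]
  ring

lemma x_swap (σ : Matrix Q Q ℂ) (hσ : σ.IsHermitian) (j k : Fin 4) :
    x σ k j = starRingEnd ℂ (x σ j k) := by
  have h : ∀ p q : Q, starRingEnd ℂ (σ p q) = σ q p := fun p q => by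
    conv_rhs => rw [← hσ]
    rfl
  simp only [x, dotProduct, mulVec, map_sum, _root_.map_mul, Pi.star_apply, RCLike.star_def,
    Complex.conj_conj, Finset.mul_sum]
  rw [Finset.sum_comm]
  exact Finset.sum_congr rfl fun p _ => Finset.sum_congr rfl fun q _ => by
    rw [← h p q]; ring

/-- `Tr((σ⊗σ) L₃⁺) = Σ_{j=1}^3 (x₀₀ x_{jj} + |x₀ⱼ|²)`. -/
theorem stmt10 (σ : Matrix Q Q ℂ) (hσ : σ.PosSemidef) (htr : σ.trace = 1) :
    ((σ ⊗ₖ σ) * L3p).trace =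
      (x σ 0 0 * x σ 1 1 + ((‖x σ 0 1‖ : ℂ)) ^ 2) +
      (x σ 0 0 * x σ 2 2 + ((‖x σ 0 2‖ : ℂ)) ^ 2) +
      (x σ 0 0 * x σ 3 3 + ((‖x σ 0 3‖ : ℂ)) ^ 2) := by
  have mc : ∀ z : ℂ, z * starRingEnd ℂ z = ((‖z‖ : ℂ)) ^ 2 := by
    intro z
    rw [Complex.mul_conj]
    norm_cast
    rw [Complex.normSq_eq_norm_sq]
  have key : ∀ j : Fin 4, star (e 0 j + e j 0) ⬝ᵥ (σ ⊗ₖ σ).mulVec (e 0 j + e j 0)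
      = 2 * (x σ 0 0 * x σ j j) + 2 * ((‖x σ 0 j‖ : ℂ)) ^ 2 := by
    intro j
    simp only [star_add, add_dotProduct, mulVec_add, dotProduct_add, kron_dot]
    rw [x_swap σ hσ.1 0 j, mc, mul_comm (starRingEnd ℂ (x σ 0 j)) (x σ 0 j), mc]
    ring
  rw [L3p]
  simp only [Matrix.mul_add, Matrix.mul_smul, Matrix.trace_add, Matrix.trace_smul,
    trace_mul_outer, key, smul_eq_mul]
  ring
end
end

section
/- Let w₁, w₂ be real numbers with w₁ ≥ 0, w₂ ≥ 0 and 3·w₁ + 2·w₂ ≥ 1, and let T₀ = w₁·(K₅⁺ + K₃⁻ + K₁⁺) + w₂·(L₃⁺ + L₃⁻) + L₁⁺. Then for every density matrix σ on ℂ² ⊗ ℂ² with θ = ⟨φ⁰, σ φ⁰⟩ ≥ 1/4, one has Tr((σ ⊗ σ)·T₀) ≥ θ² + (1 − θ)²/3, i.e., the W-invariant test T₀ᵂ with w₁ = 1/3, w₂ = 0 uniformly minimizes the type 2 error probability on this set of states. -/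
open Matrix
open scoped Matrix Kronecker ComplexOrder

noncomputable section

lemma decompK : K5 + K3m + K1 =
    outer (e 1 1) + outer (e 1 2) + outer (e 1 3) + outer (e 2 1) + outer (e 2 2) +
      outer (e 2 3) + outer (e 3 1) + outer (e 3 2) + outer (e 3 3) := by
  ext i j
  simp only [K5, K3m, K1, outer, vecMulVec, Matrix.add_apply, Matrix.smul_apply, Matrix.of_apply,
    Pi.add_apply, Pi.sub_apply, Pi.smul_apply, Pi.star_apply, star_add, star_sub, star_smul,
    smul_eq_mul, Complex.star_def, map_add, map_sub, _root_.map_mul, map_ofNat, Complex.conj_ofNat]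
  ring

lemma decompL : L3p + L3m = outer (e 0 1) + outer (e 1 0) + outer (e 0 2) + outer (e 2 0) +
    outer (e 0 3) + outer (e 3 0) := by
  ext i j
  simp only [L3p, L3m, outer, vecMulVec, Matrix.add_apply, Matrix.smul_apply, Matrix.of_apply,
    Pi.add_apply, Pi.sub_apply, Pi.star_apply, star_add, star_sub,
    smul_eq_mul]
  ring

lemma trace_kron_outer' {n m : Type*} [Fintype n] [Fintype m]
    (A : Matrix n n ℂ) (B : Matrix m m ℂ) (u : n → ℂ) (v : m → ℂ) :
    ((A ⊗ₖ B) * outer (fun pq : n × m => u pq.1 * v pq.2)).trace =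
      (star u ⬝ᵥ A.mulVec u) * (star v ⬝ᵥ B.mulVec v) := by
  simp only [Matrix.trace, Matrix.diag_apply, Matrix.mul_apply, Matrix.kroneckerMap_apply,
    outer, vecMulVec, Matrix.of_apply, Pi.star_apply, dotProduct, Matrix.mulVec,
    Fintype.sum_prod_type, star_mul']
  rw [Finset.sum_mul_sum]
  refine Finset.sum_congr rfl fun p1 _ => ?_
  refine Finset.sum_congr rfl fun p2 _ => ?_
  rw [Finset.mul_sum, Finset.mul_sum, Finset.sum_mul_sum]
  refine Finset.sum_congr rfl fun q1 _ => ?_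
  refine Finset.sum_congr rfl fun q2 _ => ?_
  ring

lemma trace_kron_outer (σ : Matrix Q Q ℂ) (j k : Fin 4) :
    ((σ ⊗ₖ σ) * outer (e j k)).trace = x σ j j * x σ k k :=
  trace_kron_outer' σ σ (bell j) (bell k)

lemma bell_complete (p q : Q) :
    ∑ j : Fin 4, star (bell j p) * bell j q = if p = q then 1 else 0 := by
  have h2 : (Real.sqrt 2 : ℂ) * (Real.sqrt 2 : ℂ) = 2 := by
    rw [← Complex.ofReal_mul, Real.mul_self_sqrt (by norm_num)]; norm_num
  have h0 : (Real.sqrt 2 : ℂ) ≠ 0 := by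
    simp [Complex.ofReal_ne_zero, Real.sqrt_ne_zero']
  obtain ⟨a, b⟩ := p; obtain ⟨c, d⟩ := q
  fin_cases a <;> fin_cases b <;> fin_cases c <;> fin_cases d <;>
    simp only [Fin.sum_univ_four, bell, ket, Prod.mk.injEq] <;>
    field_simp <;>
    simp [Complex.ext_iff] <;> ring_nf <;> field_simp <;> norm_num

lemma sum_x_diag (σ : Matrix Q Q ℂ) : ∑ j : Fin 4, x σ j j = σ.trace := by
  simp only [x, dotProduct, Matrix.mulVec, Pi.star_apply, Matrix.trace, Matrix.diag_apply]
  rw [Finset.sum_comm]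
  refine Finset.sum_congr rfl fun p _ => ?_
  simp only [Finset.mul_sum, dotProduct]
  rw [Finset.sum_comm]
  have : ∀ q : Q, ∑ j : Fin 4, star (bell j p) * (σ p q * bell j q)
      = σ p q * (if p = q then 1 else 0) := by
    intro q
    rw [← bell_complete p q, Finset.mul_sum]
    exact Finset.sum_congr rfl fun j _ => by ring
  rw [Finset.sum_congr rfl fun q _ => this q]
  simp

/-- Among the W-invariant level-zero tests
`T₀ = w₁(K₅⁺+K₃⁻+K₁⁺) + w₂(L₃⁺+L₃⁻) + L₁⁺` with `w₁, w₂ ≥ 0` and `3w₁+2w₂ ≥ 1`,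
the test with `w₁ = 1/3, w₂ = 0` uniformly minimizes the type 2 error probability
on states with `θ = ⟨φ⁰, σ φ⁰⟩ ≥ 1/4`: one always has
`Tr((σ⊗σ) T₀) ≥ θ² + (1−θ)²/3`. -/
theorem stmt16 (w1 w2 : ℝ) (hw1 : 0 ≤ w1) (hw2 : 0 ≤ w2) (hw : 1 ≤ 3 * w1 + 2 * w2)
    (σ : Matrix Q Q ℂ) (hσ : σ.PosSemidef) (htr : σ.trace = 1)
    (θ : ℝ) (hθ : (θ : ℂ) = star (bell 0) ⬝ᵥ σ.mulVec (bell 0)) (hθ4 : 1 / 4 ≤ θ) :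
    θ ^ 2 + (1 - θ) ^ 2 / 3 ≤
      (((σ ⊗ₖ σ) * ((w1 : ℂ) • (K5 + K3m + K1) + (w2 : ℂ) • (L3p + L3m) + L1)).trace).re := by
  have hx : ∀ j : Fin 4, x σ j j = ((x σ j j).re : ℂ) ∧ 0 ≤ (x σ j j).re := by
    intro j
    have h := hσ.dotProduct_mulVec_nonneg (bell j)
    rw [Complex.le_def] at h
    have him : (x σ j j).im = 0 := by simpa [x] using h.2.symm
    exact ⟨Complex.ext rfl (by simp [him]), by simpa [x] using h.1⟩
  have ha0 : (x σ 0 0).re = θ := by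
    have h : x σ 0 0 = (θ : ℂ) := hθ.symm
    rw [h]; exact Complex.ofReal_re θ
  set s : ℝ := (x σ 1 1).re + (x σ 2 2).re + (x σ 3 3).re with hs
  have hsum : θ + s = 1 := by
    have h1 := sum_x_diag σ
    rw [htr, Fin.sum_univ_four, (hx 0).1, (hx 1).1, (hx 2).1, (hx 3).1] at h1
    have h2 : ((θ + s : ℝ) : ℂ) = ((1 : ℝ) : ℂ) := by
      push_cast
      rw [← ha0, hs]
      push_cast
      linear_combination h1
    exact_mod_cast h2
  have hs0 : 0 ≤ s := by
    have := (hx 1).2; have := (hx 2).2; have := (hx 3).2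
    rw [hs]; positivity
  have hT : (((σ ⊗ₖ σ) * ((w1 : ℂ) • (K5 + K3m + K1) + (w2 : ℂ) • (L3p + L3m) + L1)).trace)
      = ((w1 * (s * s) + w2 * (2 * (θ * s)) + θ * θ : ℝ) : ℂ) := by
    rw [decompK, decompL, L1]
    simp only [Matrix.mul_add, Matrix.mul_smul, Matrix.trace_add, Matrix.trace_smul,
      trace_kron_outer, smul_eq_mul]
    rw [(hx 0).1, (hx 1).1, (hx 2).1, (hx 3).1]
    rw [hs, ← ha0]
    push_cast
    ring
  rw [hT, Complex.ofReal_re]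
  have h1θ : 1 - θ = s := by linarith
  rw [h1θ]
  clear_value s
  have h1 : 0 ≤ w2 * s * (3 * θ - s) :=
    mul_nonneg (mul_nonneg hw2 hs0) (by linarith)
  have h2 : 0 ≤ (3 * w1 + 2 * w2 - 1) * s * s :=
    mul_nonneg (mul_nonneg (by linarith) hs0) hs0
  have key : w1 * (s * s) + w2 * (2 * (θ * s)) - s ^ 2 / 3 =
      (1 / 3) * ((3 * w1 + 2 * w2 - 1) * s * s) + (2 / 3) * (w2 * s * (3 * θ - s)) := by ring
  nlinarith [h1, h2, key]
end
end
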